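/- Fix n ≥ 1 and let P be the generic matrix with first row and first column equal to 1: the n×n matrix over ℤ[X_{k,l} : 1 ≤ k,l ≤ n] with P_{k,l} = X_{k,l} when k ≠ 1 and l ≠ 1, and P_{k,l} = 1 when k = 1 or l = 1. For every permutation σ of {1,…,n}, the coefficient of the monomial m_σ = Π_{k ≠ 1, σ(k) ≠ 1} X_{k,σ(k)} in the polynomial det(P) equals sign(σ). -/

import Mathlib

private lemma prod_X_eq_monomial' {ι σ' : Type*} [DecidableEq ι] (s : Finset ι) (f : ι → σ') :
    ∏ i ∈ s, (MvPolynomial.X (f i) : MvPolynomial σ' ℤ) =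
      MvPolynomial.monomial (∑ i ∈ s, Finsupp.single (f i) 1) 1 := by
  classical
  induction s using Finset.induction with
  | empty => simp
  | insert a s h ih =>
      rw [Finset.prod_insert h, Finset.sum_insert h, ih, MvPolynomial.X,
        MvPolynomial.monomial_mul, one_mul]

private lemma sum_single_fst_apply {n : ℕ} (s : Finset (Fin (n + 1)))
    (g : Fin (n + 1) → Fin (n + 1)) (a b : Fin (n + 1)) :
    (∑ i ∈ s, Finsupp.single ((g i, i) : Fin (n + 1) × Fin (n + 1)) (1 : ℕ)) (a, b) =
      if b ∈ s ∧ g b = a then 1 else 0 := by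
  classical
  rw [Finsupp.finset_sum_apply]
  have : ∀ i ∈ s, (Finsupp.single ((g i, i) : Fin (n + 1) × Fin (n + 1)) (1 : ℕ)) (a, b) =
      if i = b then (if g i = a then 1 else 0) else 0 := by
    intro i _
    rw [Finsupp.single_apply]
    by_cases h1 : i = b <;> by_cases h2 : g i = a <;>
      simp [h1, h2, Prod.ext_iff]
  rw [Finset.sum_congr rfl this, Finset.sum_ite_eq' s b]
  by_cases hb : b ∈ s <;> by_cases hg : g b = a <;> simp [hb, hg]

theorem coeff_det_generic_eq_sign (n : ℕ) (σ : Equiv.Perm (Fin (n + 1))) :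
    MvPolynomial.coeff
      (∑ k ∈ Finset.univ.filter (fun k : Fin (n + 1) => k ≠ 0 ∧ σ k ≠ 0),
        Finsupp.single (k, σ k) 1)
      (Matrix.of fun k l : Fin (n + 1) =>
        if k = 0 ∨ l = 0 then (1 : MvPolynomial (Fin (n + 1) × Fin (n + 1)) ℤ)
        else MvPolynomial.X (k, l)).det
      = (Equiv.Perm.sign σ : ℤ) := by
  classical
  -- notation
  set E : (Fin (n + 1) × Fin (n + 1)) →₀ ℕ :=
    ∑ k ∈ Finset.univ.filter (fun k : Fin (n + 1) => k ≠ 0 ∧ σ k ≠ 0),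
      Finsupp.single (k, σ k) 1 with hE
  set e : Equiv.Perm (Fin (n + 1)) → ((Fin (n + 1) × Fin (n + 1)) →₀ ℕ) :=
    fun τ => ∑ i ∈ Finset.univ.filter (fun i : Fin (n + 1) => τ i ≠ 0 ∧ i ≠ 0),
      Finsupp.single (τ i, i) 1 with he
  -- pointwise evaluation of e τ
  have heval : ∀ (τ : Equiv.Perm (Fin (n + 1))) (a b : Fin (n + 1)),
      e τ (a, b) = if b ≠ 0 ∧ τ b ≠ 0 ∧ τ b = a then 1 else 0 := by
    intro τ a b
    rw [he]
    simp only
    rw [sum_single_fst_apply]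
    by_cases h1 : b = 0 <;> by_cases h2 : τ b = 0 <;> by_cases h3 : τ b = a <;>
      simp [h1, h2, h3, Finset.mem_filter]
  have hEval : ∀ a b : Fin (n + 1),
      E (a, b) = if a ≠ 0 ∧ σ a ≠ 0 ∧ σ a = b then 1 else 0 := by
    intro a b
    rw [hE, Finsupp.finset_sum_apply]
    have : ∀ k ∈ Finset.univ.filter (fun k : Fin (n + 1) => k ≠ 0 ∧ σ k ≠ 0),
        (Finsupp.single ((k, σ k) : Fin (n + 1) × Fin (n + 1)) (1 : ℕ)) (a, b) =
        if k = a then (if σ k = b then 1 else 0) else 0 := by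
      intro k _
      rw [Finsupp.single_apply]
      by_cases h1 : k = a <;> by_cases h2 : σ k = b <;> simp [h1, h2, Prod.ext_iff]
    rw [Finset.sum_congr rfl this, Finset.sum_ite_eq' _ a]
    by_cases h1 : a = 0 <;> by_cases h2 : σ a = 0 <;> by_cases h3 : σ a = b <;>
      simp [h1, h2, h3, Finset.mem_filter]
  -- e σ⁻¹ = E
  have hinv : e σ⁻¹ = E := by
    ext p
    obtain ⟨a, b⟩ := p
    rw [heval, hEval]
    congr 1
    simp only [eq_iff_iff]
    constructor
    · rintro ⟨hb, hia, hiba⟩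
      subst hiba
      refine ⟨hia, ?_, ?_⟩ <;> simp [hb]
    · rintro ⟨ha, hsa, hsab⟩
      subst hsab
      refine ⟨hsa, ?_, ?_⟩ <;> simp [ha]
  -- injectivity: e τ = E → τ = σ⁻¹
  have hinj : ∀ τ : Equiv.Perm (Fin (n + 1)), e τ = E → τ = σ⁻¹ := by
    intro τ hτ
    have key : ∀ a b : Fin (n + 1),
        (b ≠ 0 ∧ τ b ≠ 0 ∧ τ b = a) ↔ (a ≠ 0 ∧ σ a ≠ 0 ∧ σ a = b) := by
      intro a b
      have this : e τ (a, b) = E (a, b) := by rw [hτ]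
      rw [heval, hEval] at this
      constructor
      · intro h1
        by_contra h2
        rw [if_pos h1, if_neg h2] at this
        exact one_ne_zero this
      · intro h2
        by_contra h1
        rw [if_neg h1, if_pos h2] at this
        exact zero_ne_one this
    apply Equiv.ext
    intro b
    rw [Equiv.Perm.inv_def, Equiv.eq_symm_apply]
    by_cases hb : b = 0
    · subst hb
      by_cases ht0 : τ 0 = 0
      · rw [ht0]
        -- show σ 0 = 0
        by_contra hs0
        -- σ⁻¹ 0 ≠ 0 would be needed; instead: σ 0 ≠ 0.
        -- take b' := σ⁻¹ 0 ... use forward: ∀ c ≠ 0, σ c ≠ 0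
        have hall : ∀ c : Fin (n + 1), c ≠ 0 → σ c ≠ 0 := by
          intro c hc
          have hτc : τ (τ.symm c) = c := τ.apply_symm_apply c
          have hτs : τ.symm c ≠ 0 := by
            intro h
            rw [h, ht0] at hτc
            exact hc hτc.symm
          have := (key c (τ.symm c)).mp ⟨hτs, by rw [hτc]; exact hc, hτc⟩
          exact this.2.1
        have h0 : σ (σ.symm 0) = 0 := σ.apply_symm_apply 0
        have hs : σ.symm 0 ≠ 0 := by
          intro h; rw [h] at h0; exact hs0 h0
        exact hall _ hs h0
      · -- τ 0 = d ≠ 0, show σ (τ 0) = 0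
        by_contra hc
        have h := (key (τ 0) (σ (τ 0))).mpr ⟨ht0, hc, rfl⟩
        exact hc (τ.injective h.2.2)
    · by_cases htb : τ b = 0
      · -- need σ 0 = b, i.e. σ (τ b) = b
        rw [htb]
        by_contra hc
        -- σ⁻¹ b ≠ 0 case gives contradiction with key
        have hsb : σ.symm b ≠ 0 := by
          intro h
          apply hc
          rw [← h, σ.apply_symm_apply]
        have h := (key (σ.symm b) b).mpr
          ⟨hsb, by rw [σ.apply_symm_apply]; exact hb, σ.apply_symm_apply b⟩
        exact absurd htb h.2.1
      · exact ((key (τ b) b).mp ⟨hb, htb, rfl⟩).2.2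
  -- main computation
  rw [Matrix.det_apply, MvPolynomial.coeff_sum]
  have hprod : ∀ τ : Equiv.Perm (Fin (n + 1)),
      (∏ i, (Matrix.of fun k l : Fin (n + 1) =>
        if k = 0 ∨ l = 0 then (1 : MvPolynomial (Fin (n + 1) × Fin (n + 1)) ℤ)
        else MvPolynomial.X (k, l)) (τ i) i)
      = MvPolynomial.monomial (e τ) 1 := by
    intro τ
    have h1 : (∏ i, (Matrix.of fun k l : Fin (n + 1) =>
        if k = 0 ∨ l = 0 then (1 : MvPolynomial (Fin (n + 1) × Fin (n + 1)) ℤ)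
        else MvPolynomial.X (k, l)) (τ i) i)
        = ∏ i ∈ Finset.univ.filter (fun i : Fin (n + 1) => τ i ≠ 0 ∧ i ≠ 0),
            MvPolynomial.X (τ i, i) := by
      rw [← Finset.prod_filter_mul_prod_filter_not Finset.univ
        (fun i : Fin (n + 1) => τ i ≠ 0 ∧ i ≠ 0)]
      have h2 : ∏ i ∈ Finset.univ.filter
          (fun i : Fin (n + 1) => ¬(τ i ≠ 0 ∧ i ≠ 0)),
          (Matrix.of fun k l : Fin (n + 1) =>
            if k = 0 ∨ l = 0 then (1 : MvPolynomial (Fin (n + 1) × Fin (n + 1)) ℤ)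
            else MvPolynomial.X (k, l)) (τ i) i = 1 := by
        apply Finset.prod_eq_one
        intro i hi
        simp only [Finset.mem_filter, not_and_or, not_not] at hi
        simp only [Matrix.of_apply]
        rw [if_pos]
        tauto
      rw [h2, mul_one]
      apply Finset.prod_congr rfl
      intro i hi
      simp only [Finset.mem_filter] at hi
      simp only [Matrix.of_apply]
      rw [if_neg]
      tauto
    rw [h1, prod_X_eq_monomial']
  have hterm : ∀ τ : Equiv.Perm (Fin (n + 1)), τ ∈ Finset.univ →
      MvPolynomial.coeff E ((Equiv.Perm.sign τ) •
        ∏ i, (Matrix.of fun k l : Fin (n + 1) =>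
          if k = 0 ∨ l = 0 then (1 : MvPolynomial (Fin (n + 1) × Fin (n + 1)) ℤ)
          else MvPolynomial.X (k, l)) (τ i) i)
      = if e τ = E then (Equiv.Perm.sign τ : ℤ) else 0 := by
    intro τ _
    rw [hprod τ, Units.smul_def, MvPolynomial.coeff_smul, MvPolynomial.coeff_monomial]
    by_cases h : e τ = E <;> simp [h]
  rw [Finset.sum_congr rfl hterm, Finset.sum_eq_single σ⁻¹]
  · rw [if_pos hinv]
    simp
  · intro τ _ hτ
    rw [if_neg]
    intro h
    exact hτ (hinj τ h)
  · intro h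
    exact absurd (Finset.mem_univ σ⁻¹) h
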